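/- Non-signaling correlated resources shared between the two decoders do not increase the classical capacity region of a quantum broadcast channel: if Receiver 1 and Receiver 2 may base their decoding on the outcomes β₁, β₂ of any bipartite non-signaling correlation p(b₁,b₂|x₁,x₂) (satisfying Σ_{b₂} p(b₁,b₂|x₁,x₂) = p(b₁|x₁) and Σ_{b₁} p(b₁,b₂|x₁,x₂) = p(b₂|x₂)), then the capacity region for classical messages with degraded message sets over N_{A→B₁B₂} equals the capacity region without such resources. -/

import Mathlib

open scoped BigOperators ComplexOrder
open Matrix Kronecker Filter

noncomputable section

namespace QBC

/-- A density operator: positive semidefinite with unit trace. -/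
def IsDensity {α : Type*} [Fintype α] (ρ : Matrix α α ℂ) : Prop :=
  ρ.PosSemidef ∧ ρ.trace = 1

/-- The von Neumann entropy (in bits) of a matrix, via its eigenvalues. -/
def vnEntropy {α : Type*} [Fintype α] [DecidableEq α] (ρ : Matrix α α ℂ) : ℝ :=
  if h : ρ.IsHermitian then -∑ i, h.eigenvalues i * Real.logb 2 (h.eigenvalues i) else 0

/-- Partial trace over the second tensor factor. -/
def ptr₂ {α β : Type*} [Fintype β] (ρ : Matrix (α × β) (α × β) ℂ) : Matrix α α ℂ :=
  Matrix.of fun i j => ∑ k : β, ρ (i, k) (j, k)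

/-- Partial trace over the first tensor factor. -/
def ptr₁ {α β : Type*} [Fintype α] (ρ : Matrix (α × β) (α × β) ℂ) : Matrix β β ℂ :=
  Matrix.of fun i j => ∑ k : α, ρ (k, i) (k, j)

/-- The rank-one density operator associated with a (unit) vector. -/
def pureState {α : Type*} (ψ : α → ℂ) : Matrix α α ℂ :=
  Matrix.of fun i j => ψ i * star (ψ j)

/-- The Choi matrix of a linear map on matrices. -/
def choi {α β : Type*} [Fintype α] [DecidableEq α]
    (Φ : Matrix α α ℂ →ₗ[ℂ] Matrix β β ℂ) : Matrix (α × β) (α × β) ℂ :=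
  Matrix.of fun p q => Φ (Matrix.single p.1 q.1 1) p.2 q.2

/-- A quantum channel: completely positive (positive semidefinite Choi matrix, by Choi's
theorem) and trace preserving. -/
def IsCPTP {α β : Type*} [Fintype α] [DecidableEq α] [Fintype β]
    (Φ : Matrix α α ℂ →ₗ[ℂ] Matrix β β ℂ) : Prop :=
  (choi Φ).PosSemidef ∧ ∀ ρ, (Φ ρ).trace = ρ.trace

/-- The tensor product of two linear maps on matrices. -/
def lmTensor {α β γ δ : Type*} [Fintype α] [DecidableEq α] [Fintype γ] [DecidableEq γ]
    (Φ : Matrix α α ℂ →ₗ[ℂ] Matrix β β ℂ) (Ψ : Matrix γ γ ℂ →ₗ[ℂ] Matrix δ δ ℂ) :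
    Matrix (α × γ) (α × γ) ℂ →ₗ[ℂ] Matrix (β × δ) (β × δ) ℂ where
  toFun ρ := Matrix.of fun i j => ∑ p : α, ∑ q : α, ∑ r : γ, ∑ s : γ,
    ρ (p, r) (q, s) * (Φ (Matrix.single p q 1) i.1 j.1 *
      Ψ (Matrix.single r s 1) i.2 j.2)
  map_add' ρ σ := by
    ext i j
    simp [Matrix.add_apply, add_mul, Finset.sum_add_distrib]
  map_smul' c ρ := by
    ext i j
    simp [Matrix.smul_apply, smul_eq_mul, Finset.mul_sum, mul_assoc]

/-- The `n`-fold tensor power of a linear map on matrices. -/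
def tensorPow {α β : Type*} [Fintype α] [DecidableEq α] [Fintype β]
    (Φ : Matrix α α ℂ →ₗ[ℂ] Matrix β β ℂ) (n : ℕ) :
    Matrix (Fin n → α) (Fin n → α) ℂ →ₗ[ℂ] Matrix (Fin n → β) (Fin n → β) ℂ where
  toFun ρ := Matrix.of fun i j => ∑ p : Fin n → α, ∑ q : Fin n → α,
    ρ p q * ∏ t, Φ (Matrix.single (p t) (q t) 1) (i t) (j t)
  map_add' ρ σ := by
    ext i j
    simp [Matrix.add_apply, add_mul, Finset.sum_add_distrib]
  map_smul' c ρ := by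
    ext i j
    simp [Matrix.smul_apply, smul_eq_mul, Finset.mul_sum, mul_assoc]

/-- `n` uses of a broadcast channel, with the output arranged as `B₁ⁿ × B₂ⁿ`. -/
def prodChannel {α β₁ β₂ : Type*} [Fintype α] [DecidableEq α] [Fintype β₁] [Fintype β₂]
    (N : Matrix α α ℂ →ₗ[ℂ] Matrix (β₁ × β₂) (β₁ × β₂) ℂ) (n : ℕ) :
    Matrix (Fin n → α) (Fin n → α) ℂ →ₗ[ℂ]
      Matrix ((Fin n → β₁) × (Fin n → β₂)) ((Fin n → β₁) × (Fin n → β₂)) ℂ :=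
  (Matrix.reindexLinearEquiv ℂ ℂ (Equiv.arrowProdEquivProdArrow (Fin n) (fun _ => β₁) (fun _ => β₂))
    (Equiv.arrowProdEquivProdArrow (Fin n) (fun _ => β₁) (fun _ => β₂))).toLinearMap ∘ₗ tensorPow N n

section cq

variable {X₀ X₁ B₁ B₂ : Type*} [Fintype X₀] [DecidableEq X₀] [Fintype X₁] [DecidableEq X₁]
  [Fintype B₁] [DecidableEq B₁] [Fintype B₂] [DecidableEq B₂]

/-- The classical–quantum state `Σ p(x₀,x₁) |x₀⟩⟨x₀| ⊗ |x₁⟩⟨x₁| ⊗ ρ^{x₀,x₁}`. -/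
def cqState (p : X₀ → X₁ → ℝ) (ρ : X₀ → X₁ → Matrix (B₁ × B₂) (B₁ × B₂) ℂ) :
    Matrix ((X₀ × X₁) × (B₁ × B₂)) ((X₀ × X₁) × (B₁ × B₂)) ℂ :=
  Matrix.of fun a b => if a.1 = b.1 then (p a.1.1 a.1.2 : ℂ) * ρ a.1.1 a.1.2 a.2 b.2 else 0

variable (ρ : Matrix ((X₀ × X₁) × (B₁ × B₂)) ((X₀ × X₁) × (B₁ × B₂)) ℂ)

def redX₀ : Matrix X₀ X₀ ℂ := ptr₂ (ptr₂ ρ)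

def redX₀X₁ : Matrix (X₀ × X₁) (X₀ × X₁) ℂ := ptr₂ ρ

def redB₁ : Matrix B₁ B₁ ℂ := ptr₂ (ptr₁ ρ)

def redB₂ : Matrix B₂ B₂ ℂ := ptr₁ (ptr₁ ρ)

def redX₀B₂ : Matrix (X₀ × B₂) (X₀ × B₂) ℂ :=
  Matrix.of fun i j => ∑ u : X₁, ∑ k : B₁, ρ ((i.1, u), (k, i.2)) ((j.1, u), (k, j.2))

def redX₀B₁ : Matrix (X₀ × B₁) (X₀ × B₁) ℂ :=
  Matrix.of fun i j => ∑ u : X₁, ∑ l : B₂, ρ ((i.1, u), (i.2, l)) ((j.1, u), (j.2, l))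

def redX₁B₂ : Matrix (X₁ × B₂) (X₁ × B₂) ℂ :=
  Matrix.of fun i j => ∑ x : X₀, ∑ k : B₁, ρ ((x, i.1), (k, i.2)) ((x, j.1), (k, j.2))

def redX₀X₁B₁ : Matrix ((X₀ × X₁) × B₁) ((X₀ × X₁) × B₁) ℂ :=
  Matrix.of fun i j => ∑ l : B₂, ρ (i.1, (i.2, l)) (j.1, (j.2, l))

/-- `I(X₀;B₂)_ρ = H(X₀) + H(B₂) − H(X₀B₂)`. -/
def IX₀B₂ : ℝ := vnEntropy (redX₀ ρ) + vnEntropy (redB₂ ρ) - vnEntropy (redX₀B₂ ρ)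

/-- `I(X₁;B₁|X₀)_ρ = H(X₀X₁) + H(X₀B₁) − H(X₀) − H(X₀X₁B₁)`. -/
def IX₁B₁X₀ : ℝ :=
  vnEntropy (redX₀X₁ ρ) + vnEntropy (redX₀B₁ ρ) - vnEntropy (redX₀ ρ) -
    vnEntropy (redX₀X₁B₁ ρ)

/-- `I(X₀X₁;B₁)_ρ = H(X₀X₁) + H(B₁) − H(X₀X₁B₁)`. -/
def IX₀X₁B₁ : ℝ := vnEntropy (redX₀X₁ ρ) + vnEntropy (redB₁ ρ) - vnEntropy (redX₀X₁B₁ ρ)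

end cq

/-- The single-letter rate region `R_Cl(N)` with conferencing capacity `C₁₂`. -/
def RCl {ι β₁ β₂ : Type*} [Fintype ι] [DecidableEq ι] [Fintype β₁] [DecidableEq β₁]
    [Fintype β₂] [DecidableEq β₂]
    (N : Matrix ι ι ℂ →ₗ[ℂ] Matrix (β₁ × β₂) (β₁ × β₂) ℂ) (C₁₂ : ℝ) : Set (ℝ × ℝ) :=
  {r | ∃ (a b : ℕ) (p : Fin a → Fin b → ℝ) (θ : Fin a → Fin b → Matrix ι ι ℂ),
    (∀ x₀ x₁, 0 ≤ p x₀ x₁) ∧ (∑ x₀, ∑ x₁, p x₀ x₁) = 1 ∧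
    (∀ x₀ x₁, IsDensity (θ x₀ x₁)) ∧
    r.1 ≤ IX₀B₂ (cqState p fun x₀ x₁ => N (θ x₀ x₁)) + C₁₂ ∧
    r.2 ≤ IX₁B₁X₀ (cqState p fun x₀ x₁ => N (θ x₀ x₁)) ∧
    r.1 + r.2 ≤ IX₀X₁B₁ (cqState p fun x₀ x₁ => N (θ x₀ x₁))}

/-- A classical code with degraded message sets and conferencing:
`M₀` common messages, `M₁` private messages for User 1, `K` conference messages. -/
structure CCode (ι β₁ β₂ : Type*) [Fintype ι] [DecidableEq ι] [Fintype β₁] [DecidableEq β₁]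
    [Fintype β₂] [DecidableEq β₂] (n M₀ M₁ K : ℕ) where
  enc : Fin M₀ → Fin M₁ → Matrix (Fin n → ι) (Fin n → ι) ℂ
  enc_density : ∀ m₀ m₁, IsDensity (enc m₀ m₁)
  dec1 : Fin M₀ → Fin M₁ → Fin K → Matrix (Fin n → β₁) (Fin n → β₁) ℂ
  dec1_pos : ∀ m₀ m₁ g, (dec1 m₀ m₁ g).PosSemidef
  dec1_sum : (∑ m₀, ∑ m₁, ∑ g, dec1 m₀ m₁ g) = 1
  dec2 : Fin K → Fin M₀ → Matrix (Fin n → β₂) (Fin n → β₂) ℂ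
  dec2_pos : ∀ g m₀, (dec2 g m₀).PosSemidef
  dec2_sum : ∀ g, (∑ m₀, dec2 g m₀) = 1

/-- The probability of error of a classical conferencing code, given the message pair. -/
def CCode.err {ι β₁ β₂ : Type*} [Fintype ι] [DecidableEq ι] [Fintype β₁] [DecidableEq β₁]
    [Fintype β₂] [DecidableEq β₂] {n M₀ M₁ K : ℕ}
    (N : Matrix ι ι ℂ →ₗ[ℂ] Matrix (β₁ × β₂) (β₁ × β₂) ℂ)
    (c : CCode ι β₁ β₂ n M₀ M₁ K) (m₀ : Fin M₀) (m₁ : Fin M₁) : ℝ :=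
  1 - (∑ g, ((c.dec1 m₀ m₁ g ⊗ₖ c.dec2 g m₀) * prodChannel N n (c.enc m₀ m₁)).trace).re

/-- Achievability of a classical rate pair with conferencing. -/
def achievable {ι β₁ β₂ : Type*} [Fintype ι] [DecidableEq ι] [Fintype β₁] [DecidableEq β₁]
    [Fintype β₂] [DecidableEq β₂]
    (N : Matrix ι ι ℂ →ₗ[ℂ] Matrix (β₁ × β₂) (β₁ × β₂) ℂ) (C₁₂ : ℝ) (r : ℝ × ℝ) : Prop :=
  ∀ ε : ℝ, 0 < ε → ∃ n₀ : ℕ, ∀ n, n₀ ≤ n →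
    ∃ (M₀ M₁ K : ℕ) (c : CCode ι β₁ β₂ n M₀ M₁ K),
      (2 : ℝ) ^ ((n : ℝ) * r.1) ≤ M₀ ∧ (2 : ℝ) ^ ((n : ℝ) * r.2) ≤ M₁ ∧
      (K : ℝ) ≤ (2 : ℝ) ^ ((n : ℝ) * C₁₂) ∧ ∀ m₀ m₁, CCode.err N c m₀ m₁ ≤ ε

/-- The classical capacity region with conferencing. -/
def capacityRegion {ι β₁ β₂ : Type*} [Fintype ι] [DecidableEq ι] [Fintype β₁] [DecidableEq β₁]
    [Fintype β₂] [DecidableEq β₂]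
    (N : Matrix ι ι ℂ →ₗ[ℂ] Matrix (β₁ × β₂) (β₁ × β₂) ℂ) (C₁₂ : ℝ) : Set (ℝ × ℝ) :=
  {r | achievable N C₁₂ r}


/-- The trace norm `‖A‖₁ = Tr √(AᴴA)`, via the eigenvalues of `AᴴA`. -/
def traceNorm {α : Type*} [Fintype α] [DecidableEq α] (A : Matrix α α ℂ) : ℝ :=
  ∑ i, Real.sqrt ((Matrix.posSemidef_conjTranspose_mul_self A).1.eigenvalues i)

/-- Coherent information `I(A⟩B)_ρ = H(B) − H(AB)` of a bipartite state on `α × β`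
(the first factor is `A`, the second is `B`). -/
def cohInfo {α β : Type*} [Fintype α] [DecidableEq α] [Fintype β] [DecidableEq β]
    (ρ : Matrix (α × β) (α × β) ℂ) : ℝ :=
  vnEntropy (ptr₁ ρ) - vnEntropy ρ

/-- Quantum mutual information `I(A;B)_ρ = H(A) + H(B) − H(AB)`. -/
def mutualInfo {α β : Type*} [Fintype α] [DecidableEq α] [Fintype β] [DecidableEq β]
    (ρ : Matrix (α × β) (α × β) ℂ) : ℝ :=
  vnEntropy (ptr₂ ρ) + vnEntropy (ptr₁ ρ) - vnEntropy ρ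

/-- A quantum code with quantum conferencing: message systems of dimensions `K₁`, `K₂`
and a conference register of dimension `KG` sent noiselessly from Receiver 1 to Receiver 2. -/
structure QCode (ι β₁ β₂ : Type*) [Fintype ι] [DecidableEq ι] [Fintype β₁] [DecidableEq β₁]
    [Fintype β₂] [DecidableEq β₂] (n K₁ K₂ KG : ℕ) where
  F : Matrix (Fin K₁ × Fin K₂) (Fin K₁ × Fin K₂) ℂ →ₗ[ℂ] Matrix (Fin n → ι) (Fin n → ι) ℂ
  F_cptp : IsCPTP F
  D1 : Matrix (Fin n → β₁) (Fin n → β₁) ℂ →ₗ[ℂ] Matrix (Fin K₁ × Fin KG) (Fin K₁ × Fin KG) ℂ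
  D1_cptp : IsCPTP D1
  D2 : Matrix (Fin KG × (Fin n → β₂)) (Fin KG × (Fin n → β₂)) ℂ →ₗ[ℂ] Matrix (Fin K₂) (Fin K₂) ℂ
  D2_cptp : IsCPTP D2

/-- The state recovered by the decoders: apply the encoder, `n` uses of the channel,
Receiver 1's decoder on `B₁ⁿ`, the noiseless conference link, and Receiver 2's decoder. -/
def QCode.output {ι β₁ β₂ : Type*} [Fintype ι] [DecidableEq ι] [Fintype β₁] [DecidableEq β₁]
    [Fintype β₂] [DecidableEq β₂] {n K₁ K₂ KG : ℕ}
    (N : Matrix ι ι ℂ →ₗ[ℂ] Matrix (β₁ × β₂) (β₁ × β₂) ℂ)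
    (c : QCode ι β₁ β₂ n K₁ K₂ KG)
    (ρ : Matrix (Fin K₁ × Fin K₂) (Fin K₁ × Fin K₂) ℂ) :
    Matrix (Fin K₁ × Fin K₂) (Fin K₁ × Fin K₂) ℂ :=
  lmTensor (LinearMap.id : Matrix (Fin K₁) (Fin K₁) ℂ →ₗ[ℂ] Matrix (Fin K₁) (Fin K₁) ℂ) c.D2
    (Matrix.reindex (Equiv.prodAssoc (Fin K₁) (Fin KG) (Fin n → β₂))
      (Equiv.prodAssoc (Fin K₁) (Fin KG) (Fin n → β₂))
      (lmTensor c.D1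
        (LinearMap.id : Matrix (Fin n → β₂) (Fin n → β₂) ℂ →ₗ[ℂ]
          Matrix (Fin n → β₂) (Fin n → β₂) ℂ)
        (prodChannel N n (c.F ρ))))

/-- The code recovers every message state within trace distance `ε`. -/
def QCode.good {ι β₁ β₂ : Type*} [Fintype ι] [DecidableEq ι] [Fintype β₁] [DecidableEq β₁]
    [Fintype β₂] [DecidableEq β₂] {n K₁ K₂ KG : ℕ}
    (N : Matrix ι ι ℂ →ₗ[ℂ] Matrix (β₁ × β₂) (β₁ × β₂) ℂ)
    (c : QCode ι β₁ β₂ n K₁ K₂ KG) (ε : ℝ) : Prop :=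
  ∀ ρ, IsDensity ρ → (1 / 2) * traceNorm (ρ - QCode.output N c ρ) ≤ ε

/-- Achievability of a quantum rate pair with quantum conferencing of capacity `CQ`. -/
def QAchievable {ι β₁ β₂ : Type*} [Fintype ι] [DecidableEq ι] [Fintype β₁] [DecidableEq β₁]
    [Fintype β₂] [DecidableEq β₂]
    (N : Matrix ι ι ℂ →ₗ[ℂ] Matrix (β₁ × β₂) (β₁ × β₂) ℂ) (CQ : ℝ) (q : ℝ × ℝ) : Prop :=
  ∀ ε : ℝ, 0 < ε → ∃ n₀ : ℕ, ∀ n, n₀ ≤ n →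
    ∃ (K₁ K₂ KG : ℕ) (c : QCode ι β₁ β₂ n K₁ K₂ KG),
      (2 : ℝ) ^ ((n : ℝ) * q.1) ≤ K₁ ∧ (2 : ℝ) ^ ((n : ℝ) * q.2) ≤ K₂ ∧
      (KG : ℝ) ≤ (2 : ℝ) ^ ((n : ℝ) * CQ) ∧ QCode.good N c ε

/-- The quantum capacity of the primitive relay channel: the supremum of rates `Q₂`
such that `(0, Q₂)` is achievable. -/
def relayCapacity {ι β₁ β₂ : Type*} [Fintype ι] [DecidableEq ι] [Fintype β₁] [DecidableEq β₁]
    [Fintype β₂] [DecidableEq β₂]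
    (N : Matrix ι ι ℂ →ₗ[ℂ] Matrix (β₁ × β₂) (β₁ × β₂) ℂ) (CQ : ℝ) : ℝ :=
  sSup {q : ℝ | QAchievable N CQ (0, q)}

/-- The entanglement of formation of a bipartite state on `α × β`,
with respect to the bipartition `α | β`. -/
def EF {α β : Type*} [Fintype α] [DecidableEq α] [Fintype β] [DecidableEq β]
    (ρ : Matrix (α × β) (α × β) ℂ) : ℝ :=
  sInf {x : ℝ | ∃ (m : ℕ) (p : Fin m → ℝ) (ψ : Fin m → α × β → ℂ),
    (∀ i, 0 ≤ p i) ∧ (∑ i, p i) = 1 ∧ (∀ i, (∑ v, ‖ψ i v‖ ^ 2) = 1) ∧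
    ρ = ∑ i, (p i : ℂ) • pureState (ψ i) ∧
    x = ∑ i, p i * vnEntropy (ptr₂ (pureState (ψ i)))}


/-- The identity channel. -/
def idChan (α : Type*) : Matrix α α ℂ →ₗ[ℂ] Matrix α α ℂ := LinearMap.id

/-- A classical code with degraded message sets where the decoders may base their
decoding on the outcomes of a bipartite non-signaling correlation
`p(b₁,b₂|x₁,x₂)` (with chosen inputs `inp1`, `inp2`). -/
structure NSCode (ι β₁ β₂ : Type*) [Fintype ι] [DecidableEq ι] [Fintype β₁] [DecidableEq β₁]
    [Fintype β₂] [DecidableEq β₂] (n M₀ M₁ n₁ n₂ c₁ c₂ : ℕ) where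
  enc : Fin M₀ → Fin M₁ → Matrix (Fin n → ι) (Fin n → ι) ℂ
  enc_density : ∀ m₀ m₁, IsDensity (enc m₀ m₁)
  p : Fin c₁ → Fin c₂ → Fin n₁ → Fin n₂ → ℝ
  p_nonneg : ∀ x₁ x₂ b₁ b₂, 0 ≤ p x₁ x₂ b₁ b₂
  p_sum : ∀ x₁ x₂, (∑ b₁, ∑ b₂, p x₁ x₂ b₁ b₂) = 1
  p_ns1 : ∀ x₁ x₂ x₂' b₁, (∑ b₂, p x₁ x₂ b₁ b₂) = ∑ b₂, p x₁ x₂' b₁ b₂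
  p_ns2 : ∀ x₁ x₁' x₂ b₂, (∑ b₁, p x₁ x₂ b₁ b₂) = ∑ b₁, p x₁' x₂ b₁ b₂
  inp1 : Fin c₁
  inp2 : Fin c₂
  dec1 : Fin n₁ → Fin M₀ → Fin M₁ → Matrix (Fin n → β₁) (Fin n → β₁) ℂ
  dec1_pos : ∀ b₁ m₀ m₁, (dec1 b₁ m₀ m₁).PosSemidef
  dec1_sum : ∀ b₁, (∑ m₀, ∑ m₁, dec1 b₁ m₀ m₁) = 1
  dec2 : Fin n₂ → Fin M₀ → Matrix (Fin n → β₂) (Fin n → β₂) ℂ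
  dec2_pos : ∀ b₂ m₀, (dec2 b₂ m₀).PosSemidef
  dec2_sum : ∀ b₂, (∑ m₀, dec2 b₂ m₀) = 1

/-- The probability of error of a code with non-signaling resources, given the messages:
average over the correlation outcomes of the joint success probability. -/
def NSCode.err {ι β₁ β₂ : Type*} [Fintype ι] [DecidableEq ι] [Fintype β₁] [DecidableEq β₁]
    [Fintype β₂] [DecidableEq β₂] {n M₀ M₁ n₁ n₂ c₁ c₂ : ℕ}
    (N : Matrix ι ι ℂ →ₗ[ℂ] Matrix (β₁ × β₂) (β₁ × β₂) ℂ)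
    (c : NSCode ι β₁ β₂ n M₀ M₁ n₁ n₂ c₁ c₂) (m₀ : Fin M₀) (m₁ : Fin M₁) : ℝ :=
  1 - ∑ b₁, ∑ b₂, c.p c.inp1 c.inp2 b₁ b₂ *
    (((c.dec1 b₁ m₀ m₁ ⊗ₖ c.dec2 b₂ m₀) * prodChannel N n (c.enc m₀ m₁)).trace).re

/-- Achievability of a classical rate pair with non-signaling correlated resources
shared between the decoders. -/
def nsAchievable {ι β₁ β₂ : Type*} [Fintype ι] [DecidableEq ι] [Fintype β₁] [DecidableEq β₁]
    [Fintype β₂] [DecidableEq β₂]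
    (N : Matrix ι ι ℂ →ₗ[ℂ] Matrix (β₁ × β₂) (β₁ × β₂) ℂ) (r : ℝ × ℝ) : Prop :=
  ∀ ε : ℝ, 0 < ε → ∃ n₀ : ℕ, ∀ n, n₀ ≤ n →
    ∃ (M₀ M₁ n₁ n₂ c₁ c₂ : ℕ) (c : NSCode ι β₁ β₂ n M₀ M₁ n₁ n₂ c₁ c₂),
      (2 : ℝ) ^ ((n : ℝ) * r.1) ≤ M₀ ∧ (2 : ℝ) ^ ((n : ℝ) * r.2) ≤ M₁ ∧
      ∀ m₀ m₁, NSCode.err N c m₀ m₁ ≤ ε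

/-- Achievability of a classical rate pair without such resources: the correlation is
trivial (all sets of outcomes and inputs are singletons). -/
def plainAchievable {ι β₁ β₂ : Type*} [Fintype ι] [DecidableEq ι] [Fintype β₁]
    [DecidableEq β₁] [Fintype β₂] [DecidableEq β₂]
    (N : Matrix ι ι ℂ →ₗ[ℂ] Matrix (β₁ × β₂) (β₁ × β₂) ℂ) (r : ℝ × ℝ) : Prop :=
  ∀ ε : ℝ, 0 < ε → ∃ n₀ : ℕ, ∀ n, n₀ ≤ n →
    ∃ (M₀ M₁ : ℕ) (c : NSCode ι β₁ β₂ n M₀ M₁ 1 1 1 1),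
      (2 : ℝ) ^ ((n : ℝ) * r.1) ≤ M₀ ∧ (2 : ℝ) ^ ((n : ℝ) * r.2) ≤ M₁ ∧
      ∀ m₀ m₁, NSCode.err N c m₀ m₁ ≤ ε

set_option linter.unusedSectionVars false
section Aux
variable {a b : Type*} [Fintype a] [DecidableEq a] [Fintype b] [DecidableEq b]

lemma Matrix.posSemidef_iff_eq_transpose_mul_self {M : Matrix a a ℂ} :
    M.PosSemidef ↔ ∃ B : Matrix a a ℂ, M = Bᴴ * B := by
  open scoped MatrixOrder in
  constructor
  · intro h
    obtain ⟨B, hB⟩ := CStarAlgebra.nonneg_iff_eq_star_mul_self.mp h.nonneg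
    exact ⟨B, hB⟩
  · rintro ⟨B, rfl⟩
    exact Matrix.posSemidef_conjTranspose_mul_self B

lemma psd_trace_nonneg {M : Matrix a a ℂ} (hM : M.PosSemidef) : 0 ≤ M.trace := by
  refine Finset.sum_nonneg fun i _ => ?_
  have h := hM.dotProduct_mulVec_nonneg (Pi.single i 1)
  simpa [Matrix.mulVec_single, dotProduct, Pi.single_apply, apply_ite] using h

lemma psd_mul_trace_nonneg {P σ : Matrix a a ℂ} (hP : P.PosSemidef) (hσ : σ.PosSemidef) :
    0 ≤ ((P * σ).trace) := by
  obtain ⟨B, rfl⟩ := Matrix.posSemidef_iff_eq_transpose_mul_self.mp hP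
  rw [Matrix.mul_assoc, Matrix.trace_mul_comm]
  exact psd_trace_nonneg (hσ.mul_mul_conjTranspose_same B)

lemma kron_conjT (A : Matrix a a ℂ) (B : Matrix b b ℂ) : (A ⊗ₖ B)ᴴ = Aᴴ ⊗ₖ Bᴴ := by
  ext ⟨i, k⟩ ⟨j, l⟩
  simp [Matrix.conjTranspose_apply, Matrix.kroneckerMap_apply, mul_comm]

lemma kron_psd {A : Matrix a a ℂ} {B : Matrix b b ℂ} (hA : A.PosSemidef) (hB : B.PosSemidef) :
    (A ⊗ₖ B).PosSemidef := by
  obtain ⟨A₁, rfl⟩ := Matrix.posSemidef_iff_eq_transpose_mul_self.mp hA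
  obtain ⟨B₁, rfl⟩ := Matrix.posSemidef_iff_eq_transpose_mul_self.mp hB
  rw [Matrix.mul_kronecker_mul, ← kron_conjT]
  exact Matrix.posSemidef_conjTranspose_mul_self _

lemma psd_sum {ι' : Type*} (s : Finset ι') (f : ι' → Matrix a a ℂ)
    (h : ∀ i ∈ s, (f i).PosSemidef) : (∑ i ∈ s, f i).PosSemidef := by
  classical
  induction s using Finset.induction_on with
  | empty => simpa using Matrix.PosSemidef.zero
  | @insert i s hni ih =>
    rw [Finset.sum_insert hni]
    exact (h _ (Finset.mem_insert_self _ _)).add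
      (ih fun j hj => h j (Finset.mem_insert_of_mem hj))

lemma psd_smul {M : Matrix a a ℂ} (hM : M.PosSemidef) {w : ℝ} (hw : 0 ≤ w) :
    ((w : ℂ) • M).PosSemidef := by
  refine Matrix.PosSemidef.of_dotProduct_mulVec_nonneg ?_ ?_
  · have : ((w : ℂ) • M)ᴴ = (w : ℂ) • Mᴴ := by
      rw [Matrix.conjTranspose_smul]; norm_num
    rw [Matrix.IsHermitian, this, hM.1]
  · intro x
    rw [Matrix.smul_mulVec, dotProduct_smul]
    exact mul_nonneg (by exact_mod_cast hw) (hM.dotProduct_mulVec_nonneg x)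

end Aux

section Aux2
variable {a b : Type*} [Fintype a] [DecidableEq a] [Fintype b] [DecidableEq b]

lemma sum_comm₄ {α₁ α₂ α₃ α₄ : Type*} [Fintype α₁] [Fintype α₂] [Fintype α₃] [Fintype α₄]
    (f : α₁ → α₂ → α₃ → α₄ → ℂ) :
    ∑ a₁, ∑ a₂, ∑ a₃, ∑ a₄, f a₁ a₂ a₃ a₄ = ∑ a₃, ∑ a₄, ∑ a₁, ∑ a₂, f a₁ a₂ a₃ a₄ := by
  calc ∑ a₁, ∑ a₂, ∑ a₃, ∑ a₄, f a₁ a₂ a₃ a₄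
      = ∑ a₁, ∑ a₃, ∑ a₂, ∑ a₄, f a₁ a₂ a₃ a₄ :=
        Finset.sum_congr rfl fun _ _ => Finset.sum_comm
    _ = ∑ a₃, ∑ a₁, ∑ a₂, ∑ a₄, f a₁ a₂ a₃ a₄ := Finset.sum_comm
    _ = ∑ a₃, ∑ a₁, ∑ a₄, ∑ a₂, f a₁ a₂ a₃ a₄ :=
        Finset.sum_congr rfl fun _ _ => Finset.sum_congr rfl fun _ _ => Finset.sum_comm
    _ = ∑ a₃, ∑ a₄, ∑ a₁, ∑ a₂, f a₁ a₂ a₃ a₄ :=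
        Finset.sum_congr rfl fun _ _ => Finset.sum_comm

lemma map_apply_eq_choi (Φ : Matrix a a ℂ →ₗ[ℂ] Matrix b b ℂ) (ρ : Matrix a a ℂ) (i j : b) :
    Φ ρ i j = ∑ p : a, ∑ q : a, ρ p q * choi Φ (p, i) (q, j) := by
  conv_lhs => rw [Matrix.matrix_eq_sum_single ρ]
  rw [map_sum, Matrix.sum_apply]
  refine Finset.sum_congr rfl fun p _ => ?_
  rw [map_sum, Matrix.sum_apply]
  refine Finset.sum_congr rfl fun q _ => ?_
  have h1 : Matrix.single p q (ρ p q) = ρ p q • Matrix.single p q 1 := by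
    rw [Matrix.smul_single, smul_eq_mul, mul_one]
  rw [h1, LinearMap.map_smul, Matrix.smul_apply, smul_eq_mul]
  rfl

lemma psd_map {Φ : Matrix a a ℂ →ₗ[ℂ] Matrix b b ℂ} (hΦ : (choi Φ).PosSemidef)
    {ρ : Matrix a a ℂ} (hρ : ρ.PosSemidef) : (Φ ρ).PosSemidef := by
  obtain ⟨R, hR⟩ := Matrix.posSemidef_iff_eq_transpose_mul_self.mp hρ
  obtain ⟨S, hS⟩ := Matrix.posSemidef_iff_eq_transpose_mul_self.mp hΦ
  have hRe : ∀ p q : a, ρ p q = ∑ m, star (R m p) * R m q := by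
    intro p q; rw [hR]; simp [Matrix.mul_apply, Matrix.conjTranspose_apply]
  have hSe : ∀ x y : a × b, choi Φ x y = ∑ u, star (S u x) * S u y := by
    intro x y; rw [hS]; simp [Matrix.mul_apply, Matrix.conjTranspose_apply]
  have key : Φ ρ = (Matrix.of fun (mk : a × (a × b)) (j : b) =>
      ∑ q, R mk.1 q * S mk.2 (q, j))ᴴ *
      (Matrix.of fun (mk : a × (a × b)) (j : b) => ∑ q, R mk.1 q * S mk.2 (q, j)) := by
    ext i j
    rw [map_apply_eq_choi]
    calc ∑ p, ∑ q, ρ p q * choi Φ (p, i) (q, j)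
        = ∑ p, ∑ q, ∑ m, ∑ u,
            (star (R m p) * star (S u (p, i))) * (R m q * S u (q, j)) := by
          refine Finset.sum_congr rfl fun p _ => Finset.sum_congr rfl fun q _ => ?_
          rw [hRe, hSe, Finset.sum_mul_sum]
          exact Finset.sum_congr rfl fun m _ => Finset.sum_congr rfl fun u _ => by ring
      _ = ∑ m, ∑ u, ∑ p, ∑ q,
            (star (R m p) * star (S u (p, i))) * (R m q * S u (q, j)) := sum_comm₄ _
      _ = _ := by
          simp only [Matrix.mul_apply, Matrix.conjTranspose_apply, Matrix.of_apply,
            star_sum, star_mul', Fintype.sum_prod_type, Finset.sum_mul_sum]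
  rw [key]
  exact Matrix.posSemidef_conjTranspose_mul_self _
end Aux2

section Aux3
variable {u v : Type*} [Fintype u] [DecidableEq u] [Fintype v] [DecidableEq v]

lemma choi_tensorPow_apply (N : Matrix u u ℂ →ₗ[ℂ] Matrix v v ℂ) (n : ℕ)
    (p q : (Fin n → u) × (Fin n → v)) :
    choi (tensorPow N n) p q = ∏ t, choi N (p.1 t, p.2 t) (q.1 t, q.2 t) := by
  show (tensorPow N n) (Matrix.single p.1 q.1 1) p.2 q.2 = _
  show ∑ p' : Fin n → u, ∑ q' : Fin n → u,
      Matrix.single p.1 q.1 1 p' q' * ∏ t, _ = _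
  rw [Finset.sum_eq_single p.1, Finset.sum_eq_single q.1]
  · simp [Matrix.single]
    rfl
  · intro b _ hb
    simp [Matrix.single, Ne.symm hb]
  · simp
  · intro b _ hb
    simp [Matrix.single, Ne.symm hb]
  · simp

lemma choi_tensorPow_psd {N : Matrix u u ℂ →ₗ[ℂ] Matrix v v ℂ}
    (hN : (choi N).PosSemidef) (n : ℕ) : (choi (tensorPow N n)).PosSemidef := by
  obtain ⟨S, hS⟩ := Matrix.posSemidef_iff_eq_transpose_mul_self.mp hN
  have key : choi (tensorPow N n) =
      (Matrix.of fun (k : Fin n → u × v) (pj : (Fin n → u) × (Fin n → v)) =>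
        ∏ t, S (k t) (pj.1 t, pj.2 t))ᴴ *
      (Matrix.of fun (k : Fin n → u × v) (pj : (Fin n → u) × (Fin n → v)) =>
        ∏ t, S (k t) (pj.1 t, pj.2 t)) := by
    ext p q
    rw [choi_tensorPow_apply]
    simp only [Matrix.mul_apply, Matrix.conjTranspose_apply, Matrix.of_apply, star_prod]
    calc ∏ t, choi N (p.1 t, p.2 t) (q.1 t, q.2 t)
        = ∏ t, ∑ w : u × v, star (S w (p.1 t, p.2 t)) * S w (q.1 t, q.2 t) := by
          refine Finset.prod_congr rfl fun t _ => ?_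
          rw [hS]; simp [Matrix.mul_apply, Matrix.conjTranspose_apply]
      _ = ∑ k : Fin n → u × v, ∏ t,
            star (S (k t) (p.1 t, p.2 t)) * S (k t) (q.1 t, q.2 t) := Fintype.prod_sum _
      _ = _ := by
          refine Finset.sum_congr rfl fun k _ => ?_
          rw [Finset.prod_mul_distrib]
  rw [key]
  exact Matrix.posSemidef_conjTranspose_mul_self _

lemma tensorPow_psd {N : Matrix u u ℂ →ₗ[ℂ] Matrix v v ℂ}
    (hN : (choi N).PosSemidef) (n : ℕ) {ρ : Matrix (Fin n → u) (Fin n → u) ℂ}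
    (hρ : ρ.PosSemidef) : (tensorPow N n ρ).PosSemidef :=
  psd_map (choi_tensorPow_psd hN n) hρ

lemma tensorPow_trace {N : Matrix u u ℂ →ₗ[ℂ] Matrix v v ℂ}
    (hTP : ∀ ρ, (N ρ).trace = ρ.trace) (n : ℕ) (ρ : Matrix (Fin n → u) (Fin n → u) ℂ) :
    (tensorPow N n ρ).trace = ρ.trace := by
  have hE : ∀ p q : u, (N (Matrix.single p q 1)).trace
      = if p = q then (1 : ℂ) else 0 := by
    intro p q
    rw [hTP]
    simp [Matrix.trace, Matrix.diag, Matrix.single, ite_and, Finset.sum_ite_eq,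
      eq_comm]
  calc (tensorPow N n ρ).trace
      = ∑ i : Fin n → v, ∑ p, ∑ q, ρ p q *
          ∏ t, N (Matrix.single (p t) (q t) 1) (i t) (i t) := rfl
    _ = ∑ p, ∑ q, ρ p q * ∑ i : Fin n → v,
          ∏ t, N (Matrix.single (p t) (q t) 1) (i t) (i t) := by
        rw [Finset.sum_comm]
        refine Finset.sum_congr rfl fun p _ => ?_
        rw [Finset.sum_comm]
        refine Finset.sum_congr rfl fun q _ => ?_
        rw [Finset.mul_sum]
    _ = ∑ p, ∑ q, ρ p q * ∏ t, (N (Matrix.single (p t) (q t) 1)).trace := by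
        refine Finset.sum_congr rfl fun p _ => Finset.sum_congr rfl fun q _ => ?_
        congr 1
        exact (Fintype.prod_sum fun t (x : v) =>
          N (Matrix.single (p t) (q t) 1) x x).symm
    _ = ∑ p, ∑ q, ρ p q * if p = q then 1 else 0 := by
        refine Finset.sum_congr rfl fun p _ => Finset.sum_congr rfl fun q _ => ?_
        simp only [hE]
        congr 1
        by_cases h : p = q
        · simp [h]
        · obtain ⟨t, ht⟩ := Function.ne_iff.mp h
          rw [if_neg h]
          exact Finset.prod_eq_zero (Finset.mem_univ t) (if_neg ht)
    _ = ρ.trace := by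
        simp [Matrix.trace, Matrix.diag, mul_ite, Finset.sum_ite_eq]
end Aux3

section Aux4
variable {ι β₁ β₂ : Type*} [Fintype ι] [DecidableEq ι] [Fintype β₁] [DecidableEq β₁]
  [Fintype β₂] [DecidableEq β₂]

lemma prodChannel_psd {N : Matrix ι ι ℂ →ₗ[ℂ] Matrix (β₁ × β₂) (β₁ × β₂) ℂ}
    (hN : (choi N).PosSemidef) (n : ℕ) {ρ : Matrix (Fin n → ι) (Fin n → ι) ℂ}
    (hρ : ρ.PosSemidef) : (prodChannel N n ρ).PosSemidef := by
  have : prodChannel N n ρ = (tensorPow N n ρ).submatrix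
      (Equiv.arrowProdEquivProdArrow (Fin n) (fun _ => β₁) (fun _ => β₂)).symm
      (Equiv.arrowProdEquivProdArrow (Fin n) (fun _ => β₁) (fun _ => β₂)).symm := rfl
  rw [this]
  exact (tensorPow_psd hN n hρ).submatrix _

lemma prodChannel_trace {N : Matrix ι ι ℂ →ₗ[ℂ] Matrix (β₁ × β₂) (β₁ × β₂) ℂ}
    (hTP : ∀ ρ, (N ρ).trace = ρ.trace) (n : ℕ) (ρ : Matrix (Fin n → ι) (Fin n → ι) ℂ) :
    (prodChannel N n ρ).trace = ρ.trace := by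
  have h1 : (prodChannel N n ρ).trace = ∑ i, tensorPow N n ρ
      ((Equiv.arrowProdEquivProdArrow (Fin n) (fun _ => β₁) (fun _ => β₂)).symm i)
      ((Equiv.arrowProdEquivProdArrow (Fin n) (fun _ => β₁) (fun _ => β₂)).symm i) := rfl
  rw [h1, Equiv.sum_comp (Equiv.arrowProdEquivProdArrow (Fin n) (fun _ => β₁) (fun _ => β₂)).symm
    (fun j => tensorPow N n ρ j j)]
  exact tensorPow_trace hTP n ρ
end Aux4

section Core
variable {γ δ : Type*} [Fintype γ] [DecidableEq γ] [Fintype δ] [DecidableEq δ]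

lemma kron_sum_left {k : Type*} [Fintype k] (X : k → Matrix γ γ ℂ) (Y : Matrix δ δ ℂ) :
    (∑ b, X b) ⊗ₖ Y = ∑ b, X b ⊗ₖ Y := by
  ext ⟨i, u⟩ ⟨j, v⟩
  simp [Matrix.kroneckerMap_apply, Matrix.sum_apply, Finset.sum_mul]

lemma kron_sum_right {k : Type*} [Fintype k] (X : Matrix γ γ ℂ) (Y : k → Matrix δ δ ℂ) :
    X ⊗ₖ (∑ b, Y b) = ∑ b, X ⊗ₖ Y b := by
  ext ⟨i, u⟩ ⟨j, v⟩
  simp [Matrix.kroneckerMap_apply, Matrix.sum_apply, Finset.mul_sum]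

lemma kron_sub_right (X : Matrix γ γ ℂ) (Y Z : Matrix δ δ ℂ) :
    X ⊗ₖ (Y - Z) = X ⊗ₖ Y - X ⊗ₖ Z := by
  ext ⟨i, u⟩ ⟨j, v⟩
  simp [Matrix.kroneckerMap_apply, Matrix.sub_apply, mul_sub]

lemma kron_sub_left (Y Z : Matrix γ γ ℂ) (X : Matrix δ δ ℂ) :
    (Y - Z) ⊗ₖ X = Y ⊗ₖ X - Z ⊗ₖ X := by
  ext ⟨i, u⟩ ⟨j, v⟩
  simp [Matrix.kroneckerMap_apply, Matrix.sub_apply, sub_mul]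

lemma core {m₁' m₂' : ℕ} (A : Fin m₁' → Matrix γ γ ℂ) (B : Fin m₂' → Matrix δ δ ℂ)
    (p : Fin m₁' → Fin m₂' → ℝ) (σ : Matrix (γ × δ) (γ × δ) ℂ)
    (hp : ∀ b₁ b₂, 0 ≤ p b₁ b₂)
    (hσ : σ.PosSemidef) (hσt : σ.trace = 1)
    (hA : ∀ b₁, (A b₁).PosSemidef) (hB : ∀ b₂, (B b₂).PosSemidef)
    (h1A : ∀ b₁, ((1 : Matrix γ γ ℂ) - A b₁).PosSemidef)
    (h1B : ∀ b₂, ((1 : Matrix δ δ ℂ) - B b₂).PosSemidef)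
    (hpsum : ∑ b₁, ∑ b₂, p b₁ b₂ = 1) :
    1 - ((((∑ b₁, ((∑ b₂, p b₁ b₂ : ℝ) : ℂ) • A b₁) ⊗ₖ
          (∑ b₂, ((∑ b₁, p b₁ b₂ : ℝ) : ℂ) • B b₂)) * σ).trace).re
      ≤ 2 * (1 - ∑ b₁, ∑ b₂, p b₁ b₂ * (((A b₁ ⊗ₖ B b₂) * σ).trace).re) := by
  classical
  have hkr : ∀ {X : Matrix γ γ ℂ} {Y : Matrix δ δ ℂ}, X.PosSemidef → Y.PosSemidef →
      0 ≤ (((X ⊗ₖ Y) * σ).trace).re := by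
    intro X Y hX hY
    have h := psd_mul_trace_nonneg (kron_psd hX hY) hσ
    simpa using (Complex.le_def.mp h).1
  -- pointwise bounds
  have hst₁ : ∀ b₁ b₂, (((A b₁ ⊗ₖ B b₂) * σ).trace).re
      ≤ (((A b₁ ⊗ₖ (1 : Matrix δ δ ℂ)) * σ).trace).re := by
    intro b₁ b₂
    have h0 := hkr (hA b₁) (h1B b₂)
    rw [kron_sub_right, Matrix.sub_mul, Matrix.trace_sub] at h0
    simp only [Complex.sub_re] at h0
    linarith
  have hst₂ : ∀ b₁ b₂, (((A b₁ ⊗ₖ B b₂) * σ).trace).re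
      ≤ ((((1 : Matrix γ γ ℂ) ⊗ₖ B b₂) * σ).trace).re := by
    intro b₁ b₂
    have h0 := hkr (h1A b₁) (hB b₂)
    rw [kron_sub_left, Matrix.sub_mul, Matrix.trace_sub] at h0
    simp only [Complex.sub_re] at h0
    linarith
  set w₁ : Fin m₁' → ℝ := fun b₁ => ∑ b₂, p b₁ b₂ with hw₁def
  set w₂ : Fin m₂' → ℝ := fun b₂ => ∑ b₁, p b₁ b₂ with hw₂def
  set Abar := ∑ b₁, ((w₁ b₁ : ℂ)) • A b₁ with hAbar
  set Bbar := ∑ b₂, ((w₂ b₂ : ℂ)) • B b₂ with hBbar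
  have hone₁ : (∑ b₁, ((w₁ b₁ : ℂ)) • (1 : Matrix γ γ ℂ)) = 1 := by
    rw [← Finset.sum_smul, ← Complex.ofReal_sum, hpsum, Complex.ofReal_one, one_smul]
  have hone₂ : (∑ b₂, ((w₂ b₂ : ℂ)) • (1 : Matrix δ δ ℂ)) = 1 := by
    rw [← Finset.sum_smul, ← Complex.ofReal_sum]
    rw [show ∑ b₂, w₂ b₂ = 1 by rw [hw₂def]; rw [Finset.sum_comm]; exact hpsum]
    rw [Complex.ofReal_one, one_smul]
  -- averaged identities
  have havg₁ : (((Abar ⊗ₖ (1 : Matrix δ δ ℂ)) * σ).trace).re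
      = ∑ b₁, w₁ b₁ * (((A b₁ ⊗ₖ (1 : Matrix δ δ ℂ)) * σ).trace).re := by
    rw [hAbar, kron_sum_left, Matrix.sum_mul, Matrix.trace_sum, Complex.re_sum]
    refine Finset.sum_congr rfl fun b₁ _ => ?_
    rw [Matrix.smul_kronecker, smul_mul_assoc, Matrix.trace_smul, smul_eq_mul,
      Complex.re_ofReal_mul]
  have havg₂ : ((((1 : Matrix γ γ ℂ) ⊗ₖ Bbar) * σ).trace).re
      = ∑ b₂, w₂ b₂ * ((((1 : Matrix γ γ ℂ) ⊗ₖ B b₂) * σ).trace).re := by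
    rw [hBbar, kron_sum_right, Matrix.sum_mul, Matrix.trace_sum, Complex.re_sum]
    refine Finset.sum_congr rfl fun b₂ _ => ?_
    rw [Matrix.kronecker_smul, smul_mul_assoc, Matrix.trace_smul, smul_eq_mul,
      Complex.re_ofReal_mul]
  -- PSD of 1 - Abar, 1 - Bbar
  have hAbarPSD : ((1 : Matrix γ γ ℂ) - Abar).PosSemidef := by
    have : (1 : Matrix γ γ ℂ) - Abar = ∑ b₁, ((w₁ b₁ : ℂ)) • ((1 : Matrix γ γ ℂ) - A b₁) := by
      rw [hAbar]
      conv_lhs => rw [← hone₁]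
      rw [← Finset.sum_sub_distrib]
      exact Finset.sum_congr rfl fun b₁ _ => (smul_sub _ _ _).symm
    rw [this]
    exact psd_sum _ _ fun b₁ _ => psd_smul (h1A b₁)
      (Finset.sum_nonneg fun b₂ _ => hp b₁ b₂)
  have hBbarPSD : ((1 : Matrix δ δ ℂ) - Bbar).PosSemidef := by
    have : (1 : Matrix δ δ ℂ) - Bbar = ∑ b₂, ((w₂ b₂ : ℂ)) • ((1 : Matrix δ δ ℂ) - B b₂) := by
      rw [hBbar]
      conv_lhs => rw [← hone₂]
      rw [← Finset.sum_sub_distrib]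
      exact Finset.sum_congr rfl fun b₂ _ => (smul_sub _ _ _).symm
    rw [this]
    exact psd_sum _ _ fun b₂ _ => psd_smul (h1B b₂)
      (Finset.sum_nonneg fun b₁ _ => hp b₁ b₂)
  -- union-bound expansion
  have hprod : ((1 : Matrix γ γ ℂ) - Abar) ⊗ₖ ((1 : Matrix δ δ ℂ) - Bbar)
      = (1 : Matrix (γ × δ) (γ × δ) ℂ) - Abar ⊗ₖ (1 : Matrix δ δ ℂ)
        - (1 : Matrix γ γ ℂ) ⊗ₖ Bbar + Abar ⊗ₖ Bbar := by
    rw [kron_sub_left, kron_sub_right, kron_sub_right, Matrix.one_kronecker_one]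
    abel
  have hub := hkr hAbarPSD hBbarPSD
  rw [hprod, Matrix.add_mul, Matrix.sub_mul, Matrix.sub_mul, Matrix.one_mul,
    Matrix.trace_add, Matrix.trace_sub, Matrix.trace_sub, hσt] at hub
  simp only [Complex.add_re, Complex.sub_re, Complex.one_re] at hub
  -- sum bounds
  have hS1 : ∑ b₁, ∑ b₂, p b₁ b₂ * (((A b₁ ⊗ₖ B b₂) * σ).trace).re
      ≤ ∑ b₁, w₁ b₁ * (((A b₁ ⊗ₖ (1 : Matrix δ δ ℂ)) * σ).trace).re := by
    refine Finset.sum_le_sum fun b₁ _ => ?_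
    rw [hw₁def]
    rw [Finset.sum_mul]
    exact Finset.sum_le_sum fun b₂ _ =>
      mul_le_mul_of_nonneg_left (hst₁ b₁ b₂) (hp b₁ b₂)
  have hS2 : ∑ b₁, ∑ b₂, p b₁ b₂ * (((A b₁ ⊗ₖ B b₂) * σ).trace).re
      ≤ ∑ b₂, w₂ b₂ * ((((1 : Matrix γ γ ℂ) ⊗ₖ B b₂) * σ).trace).re := by
    have step : ∑ b₁, ∑ b₂, p b₁ b₂ * (((A b₁ ⊗ₖ B b₂) * σ).trace).re
        ≤ ∑ b₁, ∑ b₂, p b₁ b₂ * ((((1 : Matrix γ γ ℂ) ⊗ₖ B b₂) * σ).trace).re :=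
      Finset.sum_le_sum fun b₁ _ => Finset.sum_le_sum fun b₂ _ =>
        mul_le_mul_of_nonneg_left (hst₂ b₁ b₂) (hp b₁ b₂)
    refine step.trans ?_
    rw [Finset.sum_comm]
    refine le_of_eq (Finset.sum_congr rfl fun b₂ _ => ?_)
    rw [hw₂def, Finset.sum_mul]
  linarith [havg₁ ▸ hS1, havg₂ ▸ hS2, hub]
end Core

section Derand
variable {ι β₁ β₂ : Type*} [Fintype ι] [DecidableEq ι] [Fintype β₁] [DecidableEq β₁]
  [Fintype β₂] [DecidableEq β₂] {n M₀ M₁ n₁ n₂ c₁ c₂ : ℕ}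

set_option maxHeartbeats 2000000 in
lemma derand (N : Matrix ι ι ℂ →ₗ[ℂ] Matrix (β₁ × β₂) (β₁ × β₂) ℂ) (hN : IsCPTP N)
    (c : NSCode ι β₁ β₂ n M₀ M₁ n₁ n₂ c₁ c₂) :
    ∃ c' : NSCode ι β₁ β₂ n M₀ M₁ 1 1 1 1,
      ∀ m₀ m₁, NSCode.err N c' m₀ m₁ ≤ 2 * NSCode.err N c m₀ m₁ := by
  classical
  set w₁ : Fin n₁ → ℝ := fun b₁ => ∑ b₂, c.p c.inp1 c.inp2 b₁ b₂ with hw₁def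
  set w₂ : Fin n₂ → ℝ := fun b₂ => ∑ b₁, c.p c.inp1 c.inp2 b₁ b₂ with hw₂def
  have hw₁0 : ∀ b₁, 0 ≤ w₁ b₁ := fun b₁ =>
    Finset.sum_nonneg fun b₂ _ => c.p_nonneg _ _ _ _
  have hw₂0 : ∀ b₂, 0 ≤ w₂ b₂ := fun b₂ =>
    Finset.sum_nonneg fun b₁ _ => c.p_nonneg _ _ _ _
  have hw₁sum : ∑ b₁, w₁ b₁ = 1 := c.p_sum _ _
  have hw₂sum : ∑ b₂, w₂ b₂ = 1 := by
    rw [hw₂def]; rw [Finset.sum_comm]; exact c.p_sum _ _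
  have hone₁ : (∑ b₁, ((w₁ b₁ : ℂ)) • (1 : Matrix (Fin n → β₁) (Fin n → β₁) ℂ)) = 1 := by
    rw [← Finset.sum_smul]
    have : (∑ b₁, (w₁ b₁ : ℂ)) = 1 := by
      rw [← Complex.ofReal_sum, hw₁sum, Complex.ofReal_one]
    rw [this, one_smul]
  have hone₂ : (∑ b₂, ((w₂ b₂ : ℂ)) • (1 : Matrix (Fin n → β₂) (Fin n → β₂) ℂ)) = 1 := by
    rw [← Finset.sum_smul]
    have : (∑ b₂, (w₂ b₂ : ℂ)) = 1 := by
      rw [← Complex.ofReal_sum, hw₂sum, Complex.ofReal_one]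
    rw [this, one_smul]
  refine ⟨{
    enc := c.enc
    enc_density := c.enc_density
    p := fun _ _ _ _ => 1
    p_nonneg := fun _ _ _ _ => zero_le_one
    p_sum := fun _ _ => by simp
    p_ns1 := fun _ _ _ _ => rfl
    p_ns2 := fun _ _ _ _ => rfl
    inp1 := 0
    inp2 := 0
    dec1 := fun _ m₀ m₁ => ∑ b₁, ((w₁ b₁ : ℂ)) • c.dec1 b₁ m₀ m₁
    dec1_pos := fun _ m₀ m₁ => psd_sum _ _ fun b₁ _ =>
      psd_smul (c.dec1_pos b₁ m₀ m₁) (hw₁0 b₁)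
    dec1_sum := fun _ => by
      calc ∑ m₀, ∑ m₁, ∑ b₁, ((w₁ b₁ : ℂ)) • c.dec1 b₁ m₀ m₁
          = ∑ m₀, ∑ b₁, ∑ m₁, ((w₁ b₁ : ℂ)) • c.dec1 b₁ m₀ m₁ :=
            Finset.sum_congr rfl fun _ _ => Finset.sum_comm
        _ = ∑ b₁, ∑ m₀, ∑ m₁, ((w₁ b₁ : ℂ)) • c.dec1 b₁ m₀ m₁ := Finset.sum_comm
        _ = ∑ b₁, ((w₁ b₁ : ℂ)) • (1 : Matrix (Fin n → β₁) (Fin n → β₁) ℂ) := by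
            refine Finset.sum_congr rfl fun b₁ _ => ?_
            simp_rw [← Finset.smul_sum]
            rw [c.dec1_sum]
        _ = 1 := hone₁
    dec2 := fun _ m₀ => ∑ b₂, ((w₂ b₂ : ℂ)) • c.dec2 b₂ m₀
    dec2_pos := fun _ m₀ => psd_sum _ _ fun b₂ _ =>
      psd_smul (c.dec2_pos b₂ m₀) (hw₂0 b₂)
    dec2_sum := fun _ => by
      rw [Finset.sum_comm]
      calc ∑ b₂, ∑ m₀, ((w₂ b₂ : ℂ)) • c.dec2 b₂ m₀
          = ∑ b₂, ((w₂ b₂ : ℂ)) • (1 : Matrix (Fin n → β₂) (Fin n → β₂) ℂ) := by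
            refine Finset.sum_congr rfl fun b₂ _ => ?_
            rw [← Finset.smul_sum, c.dec2_sum]
        _ = 1 := hone₂ }, ?_⟩
  intro m₀ m₁
  have hσ : (prodChannel N n (c.enc m₀ m₁)).PosSemidef :=
    prodChannel_psd hN.1 n (c.enc_density m₀ m₁).1
  have hσt : (prodChannel N n (c.enc m₀ m₁)).trace = 1 := by
    rw [prodChannel_trace hN.2 n, (c.enc_density m₀ m₁).2]
  have h1A : ∀ b₁, ((1 : Matrix (Fin n → β₁) (Fin n → β₁) ℂ) - c.dec1 b₁ m₀ m₁).PosSemidef := by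
    intro b₁
    have he : (1 : Matrix (Fin n → β₁) (Fin n → β₁) ℂ) - c.dec1 b₁ m₀ m₁
        = ∑ x ∈ Finset.univ.erase (m₀, m₁), c.dec1 b₁ x.1 x.2 := by
      rw [Finset.sum_erase_eq_sub (Finset.mem_univ _), Fintype.sum_prod_type',
        c.dec1_sum b₁]
    rw [he]
    exact psd_sum _ _ fun x _ => c.dec1_pos b₁ x.1 x.2
  have h1B : ∀ b₂, ((1 : Matrix (Fin n → β₂) (Fin n → β₂) ℂ) - c.dec2 b₂ m₀).PosSemidef := by
    intro b₂
    have he : (1 : Matrix (Fin n → β₂) (Fin n → β₂) ℂ) - c.dec2 b₂ m₀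
        = ∑ x ∈ Finset.univ.erase m₀, c.dec2 b₂ x := by
      rw [Finset.sum_erase_eq_sub (Finset.mem_univ _), c.dec2_sum b₂]
    rw [he]
    exact psd_sum _ _ fun x _ => c.dec2_pos b₂ x
  have hcore := core (fun b₁ => c.dec1 b₁ m₀ m₁) (fun b₂ => c.dec2 b₂ m₀)
      (c.p c.inp1 c.inp2) (prodChannel N n (c.enc m₀ m₁))
      (fun b₁ b₂ => c.p_nonneg _ _ _ _) hσ hσt
      (fun b₁ => c.dec1_pos b₁ m₀ m₁) (fun b₂ => c.dec2_pos b₂ m₀) h1A h1B (c.p_sum _ _)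
  simp only [NSCode.err, Fin.sum_univ_one, one_mul]
  exact hcore
end Derand

/-- Non-signaling correlated resources shared between the two decoders
do not increase the classical capacity region of a quantum broadcast channel with
degraded message sets. -/
theorem nonsignaling_decoders_no_gain {d d₁ d₂ : ℕ}
    (N : Matrix (Fin d) (Fin d) ℂ →ₗ[ℂ] Matrix (Fin d₁ × Fin d₂) (Fin d₁ × Fin d₂) ℂ)
    (hN : IsCPTP N) :
    {r : ℝ × ℝ | nsAchievable N r} = {r : ℝ × ℝ | plainAchievable N r} := by
  ext r
  simp only [Set.mem_setOf_eq]
  constructor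
  · intro h ε hε
    obtain ⟨n₀, hn₀⟩ := h (ε / 2) (by linarith)
    refine ⟨n₀, fun n hn => ?_⟩
    obtain ⟨M₀, M₁, n₁, n₂, c₁, c₂, c, h1, h2, h3⟩ := hn₀ n hn
    obtain ⟨c', hc'⟩ := derand N hN c
    exact ⟨M₀, M₁, c', h1, h2, fun m₀ m₁ => (hc' m₀ m₁).trans (by linarith [h3 m₀ m₁])⟩
  · intro h ε hε
    obtain ⟨n₀, hn₀⟩ := h ε hε
    refine ⟨n₀, fun n hn => ?_⟩
    obtain ⟨M₀, M₁, c, h1, h2, h3⟩ := hn₀ n hn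
    exact ⟨M₀, M₁, 1, 1, 1, 1, c, h1, h2, h3⟩

end QBC
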